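/- On ℤ_p[[T]]^× there is a unique multiplicative norm operator N with φ(N(f))(T) = Π_{ξ∈μ_p} f(ξ(1+T)-1), and it satisfies: (i) N(f) ≡ f (mod p) for all f ∈ ℤ_p[[T]]^×; (ii) if f ≡ 1 (mod p^k) with k ≥ 1 then N(f) ≡ 1 (mod p^{k+1}); (iii) for k₂ ≥ k₁ ≥ 0, N^{k₂}(f) ≡ N^{k₁}(f) (mod p^{k₁+1}). -/

import Mathlib

open PowerSeries

variable (p : ℕ) [Fact p.Prime]

/-- `hφ` characterizes the Frobenius-type operator `φ(f)(T) = f((1+T)^p - 1)` on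
`ℤ_p[[T]]`: the `n`-th coefficient of `φ(f)` is the `n`-th coefficient of the polynomial
truncation of `f` evaluated at `(1+T)^p - 1`. -/
def IsFrobenius (φ : PowerSeries ℤ_[p] →+* PowerSeries ℤ_[p]) : Prop :=
  ∀ (f : PowerSeries ℤ_[p]) (n : ℕ),
    PowerSeries.coeff (R := ℤ_[p]) n (φ f) =
      PowerSeries.coeff (R := ℤ_[p]) n
        (Polynomial.eval₂ (PowerSeries.C (R := ℤ_[p])) ((1 + PowerSeries.X) ^ p - 1)
          (PowerSeries.trunc (n + 1) f))

namespace ColemanAux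

local notation "F" => PowerSeries (ZMod p)

instance : CharP (PowerSeries (ZMod p)) p :=
  charP_of_injective_ringHom (PowerSeries.C_injective) p

variable {p}

theorem coeff_pow_trunc (u : F) (k n : ℕ) :
    PowerSeries.coeff n (u ^ k)
      = PowerSeries.coeff n (((trunc (n + 1) u : Polynomial (ZMod p)) : F) ^ k) := by
  have hdvd : (X : F) ^ (n + 1) ∣ u - ((trunc (n + 1) u : Polynomial (ZMod p)) : F) := by
    rw [PowerSeries.X_pow_dvd_iff]
    intro m hm
    simp [Polynomial.coeff_coe, PowerSeries.coeff_trunc, hm, map_sub]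
  have hdvd2 := dvd_trans hdvd (sub_dvd_pow_sub_pow _ _ k)
  have := PowerSeries.X_pow_dvd_iff.mp hdvd2 n (Nat.lt_succ_self n)
  rw [map_sub, sub_eq_zero] at this
  exact this

/-- Coefficients of `u ^ p` in char `p`. -/
theorem coeff_pow_char (u : F) (n : ℕ) :
    PowerSeries.coeff n (u ^ p) = if p ∣ n then PowerSeries.coeff (n / p) u else 0 := by
  classical
  have hp : p.Prime := Fact.out
  set P : Polynomial (ZMod p) := trunc (n + 1) u with hP
  have hdvd : (X : F) ^ (n + 1) ∣ u - (P : F) := by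
    rw [PowerSeries.X_pow_dvd_iff]
    intro m hm
    simp [hP, Polynomial.coeff_coe, PowerSeries.coeff_trunc, hm, map_sub]
  have hdvd2 : (X : F) ^ (n + 1) ∣ u ^ p - (P : F) ^ p :=
    dvd_trans hdvd (sub_dvd_pow_sub_pow _ _ p)
  have hco : PowerSeries.coeff n (u ^ p) = PowerSeries.coeff n ((P : F) ^ p) := by
    have := PowerSeries.X_pow_dvd_iff.mp hdvd2 n (Nat.lt_succ_self n)
    rw [map_sub, sub_eq_zero] at this
    exact this
  have hPp : (P ^ p : Polynomial (ZMod p)) = Polynomial.expand _ p P := by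
    rw [← Polynomial.map_frobenius_expand p P, ZMod.frobenius_zmod, Polynomial.map_id]
  rw [hco, ← Polynomial.coe_pow, hPp, Polynomial.coeff_coe,
    Polynomial.coeff_expand hp.pos]
  split_ifs with h
  · rw [hP, PowerSeries.coeff_trunc, if_pos (Nat.lt_succ_of_le (Nat.div_le_self n p))]
  · rfl

theorem mod_eq_of_add_dvd {i j : Fin p} {m : ℕ} (hle : (j : ℕ) ≤ m + i)
    (hdvd : p ∣ (m + i - j)) (hm : p ∣ m) : j = i := by
  obtain ⟨c, hc⟩ := hdvd
  have hj : (j : ℕ) + p * c = m + i := by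
    rw [← hc]; exact Nat.add_sub_cancel' hle
  obtain ⟨d, hd⟩ := hm
  have : ((j : ℕ) + p * c) % p = (p * d + i) % p := by rw [hj, hd]
  rw [Nat.add_mul_mod_self_left, Nat.mul_add_mod] at this
  exact Fin.ext (by rwa [Nat.mod_eq_of_lt j.isLt, Nat.mod_eq_of_lt i.isLt] at this)

theorem split_eq_zero {a : Fin p → F}
    (h : ∑ i : Fin p, (a i) ^ p * X ^ (i : ℕ) = 0) : ∀ i, a i = 0 := by
  have hp : p.Prime := Fact.out
  intro i
  ext n
  have h2 := congrArg (PowerSeries.coeff (p * n + i)) h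
  rw [map_sum, map_zero] at h2
  rw [Finset.sum_eq_single i] at h2
  · rw [PowerSeries.coeff_mul_X_pow', if_pos (Nat.le_add_left _ _),
      Nat.add_sub_cancel, coeff_pow_char, if_pos (Dvd.intro n rfl),
      Nat.mul_div_cancel_left n hp.pos] at h2
    simpa using h2
  · intro j _ hji
    rw [PowerSeries.coeff_mul_X_pow']
    split_ifs with hle
    · rw [coeff_pow_char, if_neg]
      intro hdvd
      exact hji (mod_eq_of_add_dvd hle hdvd ⟨n, rfl⟩)
    · rfl
  · intro hi; exact absurd (Finset.mem_univ i) hi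

/-- `M` is the matrix of multiplication by `f` in the basis `X^i` (char `p` picture). -/
def IsStar (f : F) (M : Matrix (Fin p) (Fin p) F) : Prop :=
  ∀ j : Fin p, f * X ^ (j : ℕ) = ∑ i : Fin p, (M i j) ^ p * X ^ (i : ℕ)

theorem IsStar.unique {f : F} {M M' : Matrix (Fin p) (Fin p) F}
    (h : IsStar f M) (h' : IsStar f M') : M = M' := by
  refine Matrix.ext fun i j => ?_
  have key : ∑ i : Fin p, (M i j - M' i j) ^ p * X ^ (i : ℕ) = 0 := by
    have : ∀ i : Fin p, (M i j - M' i j) ^ p * X ^ (i:ℕ)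
        = (M i j) ^ p * X ^ (i:ℕ) - (M' i j) ^ p * X ^ (i:ℕ) := by
      intro i; rw [sub_pow_char, sub_mul]
    rw [Finset.sum_congr rfl fun i _ => this i, Finset.sum_sub_distrib,
      ← h j, ← h' j, sub_self]
  have := split_eq_zero key i
  exact sub_eq_zero.mp this

theorem IsStar.mul {f g : F} {M N : Matrix (Fin p) (Fin p) F}
    (hf : IsStar f M) (hg : IsStar g N) : IsStar (f * g) (M * N) := by
  intro j
  have h1 : f * g * X ^ (j : ℕ) = ∑ k : Fin p, (N k j) ^ p * (f * X ^ (k : ℕ)) := by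
    rw [mul_assoc, hg j, Finset.mul_sum]
    exact Finset.sum_congr rfl fun k _ => by ring
  rw [h1]
  have h2 : ∀ k : Fin p, (N k j) ^ p * (f * X ^ (k : ℕ))
      = ∑ i : Fin p, ((M i k) ^ p * (N k j) ^ p) * X ^ (i : ℕ) := by
    intro k
    rw [hf k, Finset.mul_sum]
    exact Finset.sum_congr rfl fun i _ => by ring
  rw [Finset.sum_congr rfl fun k _ => h2 k, Finset.sum_comm]
  refine Finset.sum_congr rfl fun i _ => ?_
  rw [← Finset.sum_mul]
  congr 1
  rw [Matrix.mul_apply, sum_pow_char]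
  exact Finset.sum_congr rfl fun k _ => (mul_pow _ _ p).symm

theorem isStar_smul_one (g : F) : IsStar (g ^ p) (g • (1 : Matrix (Fin p) (Fin p) F)) := by
  have hp : p.Prime := Fact.out
  intro j
  rw [Finset.sum_eq_single j]
  · simp [Matrix.smul_apply, Matrix.one_apply]
  · intro i _ hij
    simp [Matrix.smul_apply, Matrix.one_apply, hij, zero_pow hp.ne_zero]
  · intro hj; exact absurd (Finset.mem_univ j) hj

theorem IsStar.pow {f : F} {M : Matrix (Fin p) (Fin p) F} (hf : IsStar f M) :
    ∀ n : ℕ, IsStar (f ^ n) (M ^ n) := by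
  intro n
  induction n with
  | zero =>
      rw [pow_zero, pow_zero]
      intro j
      rw [Finset.sum_eq_single j]
      · simp [Matrix.one_apply]
      · intro i _ hij
        have hp : p.Prime := Fact.out
        simp [Matrix.one_apply, hij, zero_pow hp.ne_zero]
      · intro hj; exact absurd (Finset.mem_univ j) hj
  | succ n ih =>
      rw [pow_succ, pow_succ]
      exact ih.mul hf

theorem IsStar.det_eq {f : F} {M : Matrix (Fin p) (Fin p) F} (hf : IsStar f M) :
    M.det = f := by
  have h3 : M ^ p = f • (1 : Matrix (Fin p) (Fin p) F) :=
    (hf.pow p).unique (isStar_smul_one f)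
  have h4 : M.det ^ p = f ^ p := by
    rw [← Matrix.det_pow, h3, Matrix.det_smul, Matrix.det_one, mul_one,
      Fintype.card_fin]
  exact frobenius_inj (PowerSeries (ZMod p)) p h4

theorem IsStar.diag_eq {f : F} {M : Matrix (Fin p) (Fin p) F} (hf : IsStar f M)
    (j : Fin p) (n : ℕ) : PowerSeries.coeff n (M j j) = PowerSeries.coeff (p * n) f := by
  have hp : p.Prime := Fact.out
  have h2 := congrArg (PowerSeries.coeff (p * n + j)) (hf j)
  rw [map_sum] at h2
  rw [Finset.sum_eq_single j] at h2
  · rw [PowerSeries.coeff_mul_X_pow] at h2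
    rw [PowerSeries.coeff_mul_X_pow', if_pos (Nat.le_add_left _ _),
      Nat.add_sub_cancel, coeff_pow_char, if_pos (Dvd.intro n rfl),
      Nat.mul_div_cancel_left n hp.pos] at h2
    exact h2.symm
  · intro i _ hij
    rw [PowerSeries.coeff_mul_X_pow']
    split_ifs with hle
    · rw [coeff_pow_char, if_neg]
      intro hdvd
      exact hij (mod_eq_of_add_dvd hle hdvd ⟨n, rfl⟩)
    · rfl
  · intro hj; exact absurd (Finset.mem_univ j) hj

theorem IsStar.trace_eq_zero {f : F} {M : Matrix (Fin p) (Fin p) F} (hf : IsStar f M) :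
    M.trace = 0 := by
  have hdiag : ∀ j : Fin p, M j j = M 0 0 := by
    intro j
    ext n
    rw [hf.diag_eq j n, hf.diag_eq 0 n]
  rw [Matrix.trace]
  calc ∑ i : Fin p, M.diag i = ∑ _i : Fin p, M 0 0 :=
        Finset.sum_congr rfl fun i _ => hdiag i
    _ = (p : ℕ) • M 0 0 := by rw [Finset.sum_const, Finset.card_univ, Fintype.card_fin]
    _ = (p : F) * M 0 0 := by rw [nsmul_eq_mul]
    _ = 0 := by rw [CharP.cast_eq_zero (F) p, zero_mul]


section Zp

local notation "Rp" => PowerSeries ℤ_[p]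

/-- Reduction mod `p` of `ℤ_p[[X]]` to `(ℤ/p)[[X]]`. -/
noncomputable def pr : PowerSeries ℤ_[p] →+* PowerSeries (ZMod p) :=
  PowerSeries.map (PadicInt.toZMod)

theorem pr_coeff (f : Rp) (n : ℕ) :
    PowerSeries.coeff n (pr f) = PadicInt.toZMod (PowerSeries.coeff n f) :=
  PowerSeries.coeff_map _ _ _

theorem toZMod_eq_zero_iff (x : ℤ_[p]) : PadicInt.toZMod x = 0 ↔ (p : ℤ_[p]) ∣ x := by
  rw [← RingHom.mem_ker, PadicInt.ker_toZMod, PadicInt.maximalIdeal_eq_span_p,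
    Ideal.mem_span_singleton]

theorem natCast_pow_eq_C (k : ℕ) :
    ((p : Rp)) ^ k = PowerSeries.C (R := ℤ_[p]) ((p : ℤ_[p]) ^ k) := by
  rw [map_pow, map_natCast]

theorem p_pow_dvd_iff (k : ℕ) (f : Rp) :
    (p : Rp) ^ k ∣ f ↔ ∀ n, (p : ℤ_[p]) ^ k ∣ PowerSeries.coeff n f := by
  constructor
  · rintro ⟨g, rfl⟩ n
    rw [natCast_pow_eq_C, PowerSeries.coeff_C_mul]
    exact Dvd.intro _ rfl
  · intro h
    refine ⟨PowerSeries.mk fun n => (h n).choose, ?_⟩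
    ext n
    rw [natCast_pow_eq_C, PowerSeries.coeff_C_mul, PowerSeries.coeff_mk]
    exact (h n).choose_spec

theorem pr_eq_zero_iff (f : Rp) : pr f = 0 ↔ (p : Rp) ∣ f := by
  rw [← pow_one ((p : Rp)), p_pow_dvd_iff]
  constructor
  · intro h n
    have := congrArg (PowerSeries.coeff n) h
    rw [pr_coeff, map_zero] at this
    rw [pow_one]
    exact (toZMod_eq_zero_iff _).mp this
  · intro h
    ext n
    rw [pr_coeff, map_zero, toZMod_eq_zero_iff]
    simpa using h n

theorem eq_zero_of_forall_p_pow_dvd (g : Rp) (h : ∀ n, (p : Rp) ^ n ∣ g) : g = 0 := by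
  ext n
  have hx : ∀ k, (p : ℤ_[p]) ^ k ∣ PowerSeries.coeff n g :=
    fun k => (p_pow_dvd_iff k g).mp (h k) n
  have hp : p.Prime := Fact.out
  have hnorm : ∀ k : ℕ, ‖PowerSeries.coeff n g‖ ≤ ((p : ℝ)⁻¹) ^ k := by
    intro k
    obtain ⟨c, hc⟩ := hx k
    calc ‖PowerSeries.coeff n g‖ = ‖(p : ℤ_[p]) ^ k‖ * ‖c‖ := by rw [hc, norm_mul]
      _ ≤ ‖(p : ℤ_[p]) ^ k‖ * 1 :=
          mul_le_mul_of_nonneg_left (PadicInt.norm_le_one c) (norm_nonneg _)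
      _ = ((p : ℝ)⁻¹) ^ k := by
          rw [mul_one, norm_pow, PadicInt.norm_p, inv_pow]
  have hlim : Filter.Tendsto (fun k : ℕ => ((p : ℝ)⁻¹) ^ k) Filter.atTop (nhds 0) := by
    apply tendsto_pow_atTop_nhds_zero_of_lt_one
    · positivity
    · rw [inv_lt_one_iff₀]
      right
      exact_mod_cast hp.one_lt
  have : ‖PowerSeries.coeff n g‖ ≤ 0 := ge_of_tendsto' hlim hnorm
  simpa using le_antisymm this (norm_nonneg _)

theorem eval₂_X_pow_eq_pow (Q' : Polynomial (ZMod p)) :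
    Q'.eval₂ (PowerSeries.C (R := ZMod p)) ((X : PowerSeries (ZMod p)) ^ p) = (↑Q' : F) ^ p := by
  have h1 : Q'.eval₂ (PowerSeries.C (R := ZMod p)) ((X : F) ^ p)
      = Polynomial.coeToPowerSeries.ringHom (Q'.eval₂ Polynomial.C (Polynomial.X ^ p)) := by
    rw [Polynomial.hom_eval₂]
    congr 1
    · exact RingHom.ext fun r => by
        simp [RingHom.comp_apply, Polynomial.coeToPowerSeries.ringHom_apply,
          Polynomial.coe_C]
    · rw [map_pow, Polynomial.coeToPowerSeries.ringHom_apply, Polynomial.coe_X]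
  have h2 : Q'.eval₂ Polynomial.C (Polynomial.X ^ p) = Polynomial.expand (ZMod p) p Q' := by
    simp [Polynomial.expand, Polynomial.eval₂RingHom]
  have h3 : Polynomial.expand (ZMod p) p Q' = Q' ^ p := by
    rw [← Polynomial.map_frobenius_expand p Q', ZMod.frobenius_zmod, Polynomial.map_id]
  rw [h1, h2, h3, map_pow, Polynomial.coeToPowerSeries.ringHom_apply]

theorem pr_phi {φ : PowerSeries ℤ_[p] →+* PowerSeries ℤ_[p]} (hφ : IsFrobenius p φ)
    (g : Rp) : pr (φ g) = (pr g) ^ p := by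
  ext n
  set Q : Rp := (1 + X) ^ p - 1 with hQ
  set P : Polynomial ℤ_[p] := trunc (n + 1) g with hPdef
  have step1 : pr (P.eval₂ (PowerSeries.C (R := ℤ_[p])) Q)
      = P.eval₂ (pr.comp (PowerSeries.C (R := ℤ_[p]))) (pr Q) := Polynomial.hom_eval₂ _ _ _ _
  have step2 : pr.comp (PowerSeries.C (R := ℤ_[p]))
      = (PowerSeries.C (R := ZMod p)).comp PadicInt.toZMod :=
    RingHom.ext fun r => by
      simp only [RingHom.comp_apply]
      exact PowerSeries.map_C _ r
  have step3 : P.eval₂ ((PowerSeries.C (R := ZMod p)).comp PadicInt.toZMod) (pr Q)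
      = (P.map PadicInt.toZMod).eval₂ (PowerSeries.C (R := ZMod p)) (pr Q) :=
    (Polynomial.eval₂_map _ _ _).symm
  have step4 : pr Q = (X : F) ^ p := by
    rw [hQ]
    rw [map_sub, map_pow, map_add, map_one]
    have : pr X = (X : F) := PowerSeries.map_X _
    rw [this, add_pow_char, one_pow, add_sub_cancel_left]
  have step5 : P.map PadicInt.toZMod = trunc (n + 1) (pr g) := by
    apply Polynomial.ext
    intro m
    rw [Polynomial.coeff_map, hPdef, PowerSeries.coeff_trunc, PowerSeries.coeff_trunc]
    split_ifs with hm
    · exact (pr_coeff g m).symm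
    · exact map_zero _
  have key : PowerSeries.coeff n (pr (φ g)) = PowerSeries.coeff n
      ((↑(trunc (n + 1) (pr g)) : F) ^ p) := by
    rw [pr_coeff, hφ g n, ← pr_coeff, step1, step2, step3, step4, step5,
      eval₂_X_pow_eq_pow]
  rw [key, ← coeff_pow_trunc]

/-- "Frobenius" substitution `X ↦ X^p` on `ℤ_p[[X]]`, coefficientwise. -/
noncomputable def frZ (u : Rp) : Rp :=
  PowerSeries.mk fun n => if p ∣ n then PowerSeries.coeff (n / p) u else 0

/-- Extraction of exponents `≡ i (mod p)`. -/
noncomputable def epsZ (i : Fin p) (f : Rp) : Rp :=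
  PowerSeries.mk fun n => PowerSeries.coeff (p * n + i) f

theorem fin_eq_mod_of_dvd_sub {j : Fin p} {n : ℕ} (hle : (j : ℕ) ≤ n)
    (h : p ∣ n - j) : (j : ℕ) = n % p := by
  obtain ⟨c, hc⟩ := h
  have hn : (j : ℕ) + p * c = n := by rw [← hc]; exact Nat.add_sub_cancel' hle
  have : ((j : ℕ) + p * c) % p = n % p := by rw [hn]
  rwa [Nat.add_mul_mod_self_left, Nat.mod_eq_of_lt j.isLt] at this

theorem split_sum (f : Rp) : ∑ i : Fin p, frZ (epsZ i f) * X ^ (i : ℕ) = f := by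
  have hp : p.Prime := Fact.out
  ext n
  rw [map_sum]
  set i₀ : Fin p := ⟨n % p, Nat.mod_lt n hp.pos⟩ with hi₀
  rw [Finset.sum_eq_single i₀]
  · have h1 : (i₀ : ℕ) ≤ n := Nat.mod_le n p
    have h2 : n - (i₀ : ℕ) = p * (n / p) := by
      apply Nat.sub_eq_of_eq_add
      rw [hi₀]
      exact (Nat.div_add_mod n p).symm
    rw [PowerSeries.coeff_mul_X_pow', if_pos h1, frZ, PowerSeries.coeff_mk, h2,
      if_pos ⟨n / p, rfl⟩, Nat.mul_div_cancel_left _ hp.pos, epsZ, PowerSeries.coeff_mk]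
    exact congrArg (fun m => PowerSeries.coeff (R := ℤ_[p]) m f) (Nat.div_add_mod n p)
  · intro j _ hji
    rw [PowerSeries.coeff_mul_X_pow']
    split_ifs with hle
    · rw [frZ, PowerSeries.coeff_mk, if_neg]
      intro hdvd
      exact hji (Fin.ext ((fin_eq_mod_of_dvd_sub hle hdvd)))
    · rfl
  · intro hj; exact absurd (Finset.mem_univ i₀) hj

theorem pr_frZ (u : Rp) : pr (frZ u) = (pr u) ^ p := by
  ext n
  rw [pr_coeff, frZ, PowerSeries.coeff_mk, coeff_pow_char]
  split_ifs with h
  · exact (pr_coeff u (n / p)).symm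
  · exact map_zero _

theorem step {φ : PowerSeries ℤ_[p] →+* PowerSeries ℤ_[p]} (hφ : IsFrobenius p φ)
    (f : Rp) :
    ∃ (u : Fin p → Rp) (r : Rp), f = (∑ i : Fin p, φ (u i) * X ^ (i : ℕ)) + (p : Rp) * r := by
  refine ⟨fun i => epsZ i f, ?_⟩
  have hzero : pr (f - ∑ i : Fin p, φ (epsZ i f) * X ^ (i : ℕ)) = 0 := by
    rw [map_sub, sub_eq_zero]
    conv_lhs => rw [← split_sum f]
    rw [map_sum, map_sum]
    refine Finset.sum_congr rfl fun i _ => ?_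
    rw [map_mul, map_mul, pr_frZ, pr_phi hφ]
  obtain ⟨r, hr⟩ := (pr_eq_zero_iff _).mp hzero
  refine ⟨r, ?_⟩
  rw [← hr]
  ring

theorem partial_limit (c : ℕ → ℤ_[p]) :
    ∃ L : ℤ_[p], ∀ n,
      (p : ℤ_[p]) ^ n ∣ (L - ∑ m ∈ Finset.range n, (p : ℤ_[p]) ^ m * c m) := by
  have hp : p.Prime := Fact.out
  set S : ℕ → ℤ_[p] := fun n => ∑ m ∈ Finset.range n, (p : ℤ_[p]) ^ m * c m with hS
  have hterm : ∀ n, ‖(p : ℤ_[p]) ^ n * c n‖ ≤ ((p : ℝ)⁻¹) ^ n := by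
    intro n
    calc ‖(p : ℤ_[p]) ^ n * c n‖ = ‖(p : ℤ_[p]) ^ n‖ * ‖c n‖ := norm_mul _ _
      _ ≤ ‖(p : ℤ_[p]) ^ n‖ * 1 :=
          mul_le_mul_of_nonneg_left (PadicInt.norm_le_one _) (norm_nonneg _)
      _ = ((p : ℝ)⁻¹) ^ n := by rw [mul_one, norm_pow, PadicInt.norm_p, inv_pow]
  have hdist : ∀ n, dist (S n) (S (n + 1)) ≤ 1 * ((p : ℝ)⁻¹) ^ n := by
    intro n
    rw [one_mul, dist_eq_norm]
    have hsub : S n - S (n + 1) = -((p : ℤ_[p]) ^ n * c n) := by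
      rw [hS]
      simp [Finset.sum_range_succ]
    rw [hsub, norm_neg]
    exact hterm n
  have hr1 : ((p : ℝ)⁻¹) < 1 := by
    rw [inv_lt_one_iff₀]
    right
    exact_mod_cast hp.one_lt
  have hcauchy : CauchySeq S := cauchySeq_of_le_geometric _ 1 hr1 hdist
  obtain ⟨L, hL⟩ := cauchySeq_tendsto_of_complete hcauchy
  refine ⟨L, fun n => ?_⟩
  have hbound : ∀ m, n ≤ m → ‖S m - S n‖ ≤ ((p : ℝ)⁻¹) ^ n := by
    intro m hm
    induction m with
    | zero =>
        have hn0 : n = 0 := Nat.le_zero.mp hm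
        subst hn0
        simp
    | succ m ih =>
        rcases Nat.lt_or_ge n (m + 1) with h | h
        · have hnm : n ≤ m := Nat.lt_succ_iff.mp h
          have h1 := ih hnm
          have h2 : ‖S (m + 1) - S m‖ ≤ ((p : ℝ)⁻¹) ^ n := by
            have hsub : S (m + 1) - S m = (p : ℤ_[p]) ^ m * c m := by
              rw [hS]
              simp [Finset.sum_range_succ]
            rw [hsub]
            exact le_trans (hterm m)
              (pow_le_pow_of_le_one (by positivity) (le_of_lt hr1) hnm)
          have h3 : S (m + 1) - S n = (S (m + 1) - S m) + (S m - S n) := by ring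
          rw [h3]
          exact le_trans (PadicInt.nonarchimedean _ _) (max_le h2 h1)
        · have hn : n = m + 1 := le_antisymm hm h
          subst hn
          rw [sub_self, norm_zero]
          positivity
  have htend : Filter.Tendsto (fun m => ‖S m - S n‖) Filter.atTop (nhds ‖L - S n‖) :=
    (hL.sub_const _).norm
  have hnorm : ‖L - S n‖ ≤ ((p : ℝ)⁻¹) ^ n := by
    apply le_of_tendsto htend
    filter_upwards [Filter.eventually_ge_atTop n] with m hm using hbound m hm
  have hnorm2 : ‖L - S n‖ ≤ (p : ℝ) ^ (-(n : ℤ)) := by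
    rwa [zpow_neg, zpow_natCast, ← inv_pow]
  exact Ideal.mem_span_singleton.mp
    ((PadicInt.norm_le_pow_iff_mem_span_pow _ n).mp hnorm2)

theorem pr_X_pow (k : ℕ) : pr ((X : Rp) ^ k) = (X : PowerSeries (ZMod p)) ^ k := by
  rw [map_pow]
  congr 1
  exact PowerSeries.map_X _

theorem exists_decomp {φ : PowerSeries ℤ_[p] →+* PowerSeries ℤ_[p]} (hφ : IsFrobenius p φ)
    (f : Rp) : ∃ u : Fin p → Rp, f = ∑ i : Fin p, φ (u i) * X ^ (i : ℕ) := by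
  classical
  choose U Rm hstep using fun g => step hφ g
  set rem : ℕ → Rp := fun n => Rm^[n] f with hrem
  have hremsucc : ∀ n, rem (n + 1) = Rm (rem n) := fun n => Function.iterate_succ_apply' Rm n f
  set A : ℕ → Fin p → Rp := fun n i => ∑ m ∈ Finset.range n, (p : Rp) ^ m * U (rem m) i
    with hA
  have hAsucc : ∀ n i, φ (A (n + 1) i) = φ (A n i) + (p : Rp) ^ n * φ (U (rem n) i) := by
    intro n i
    rw [hA]
    simp only []
    rw [Finset.sum_range_succ, map_add, map_mul, map_pow, map_natCast]
  have hmain : ∀ n, f = (∑ i : Fin p, φ (A n i) * X ^ (i : ℕ)) + (p : Rp) ^ n * rem n := by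
    intro n
    induction n with
    | zero =>
        have : A 0 = fun _ => 0 := by
          funext i
          rw [hA]
          simp
        rw [this]
        simp [hrem]
    | succ n ih =>
        have hexp : (p : Rp) ^ n * rem n
            = (∑ i : Fin p, ((p : Rp) ^ n * φ (U (rem n) i)) * X ^ (i : ℕ))
              + (p : Rp) ^ (n + 1) * rem (n + 1) := by
          conv_lhs => rw [hstep (rem n)]
          rw [hremsucc n, mul_add, Finset.mul_sum]
          congr 1
          · exact Finset.sum_congr rfl fun i _ => by ring
          · ring
        calc f = (∑ i : Fin p, φ (A n i) * X ^ (i : ℕ)) + (p : Rp) ^ n * rem n := ih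
          _ = (∑ i : Fin p, (φ (A n i) + (p : Rp) ^ n * φ (U (rem n) i)) * X ^ (i : ℕ))
              + (p : Rp) ^ (n + 1) * rem (n + 1) := by
              rw [hexp, ← add_assoc, ← Finset.sum_add_distrib]
              congr 1
              exact Finset.sum_congr rfl fun i _ => by ring
          _ = (∑ i : Fin p, φ (A (n + 1) i) * X ^ (i : ℕ)) + (p : Rp) ^ (n + 1) * rem (n + 1) := by
              congr 1
              exact Finset.sum_congr rfl fun i _ => by rw [hAsucc n i]
  choose L hL using fun (i : Fin p) (j : ℕ) =>
    partial_limit (fun m => PowerSeries.coeff j (U (rem m) i))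
  set u : Fin p → Rp := fun i => PowerSeries.mk (L i) with hu
  have hcoeffA : ∀ n i j, PowerSeries.coeff j (A n i)
      = ∑ m ∈ Finset.range n, (p : ℤ_[p]) ^ m * PowerSeries.coeff j (U (rem m) i) := by
    intro n i j
    rw [hA]
    simp only []
    rw [map_sum]
    refine Finset.sum_congr rfl fun m _ => ?_
    rw [natCast_pow_eq_C, PowerSeries.coeff_C_mul]
  have hdiff : ∀ n i, (p : Rp) ^ n ∣ (u i - A n i) := by
    intro n i
    rw [p_pow_dvd_iff]
    intro j
    rw [map_sub, hu, PowerSeries.coeff_mk, hcoeffA]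
    exact hL i j n
  have hdvd : ∀ n, (p : Rp) ^ n ∣ (f - ∑ i : Fin p, φ (u i) * X ^ (i : ℕ)) := by
    intro n
    have hsplit : ∑ i : Fin p, (φ (A n i) - φ (u i)) * X ^ (i : ℕ)
        = (∑ i : Fin p, φ (A n i) * X ^ (i : ℕ)) - ∑ i : Fin p, φ (u i) * X ^ (i : ℕ) := by
      rw [← Finset.sum_sub_distrib]
      exact Finset.sum_congr rfl fun i _ => sub_mul _ _ _
    have h1 : f - ∑ i : Fin p, φ (u i) * X ^ (i : ℕ)
        = (p : Rp) ^ n * rem n + ∑ i : Fin p, (φ (A n i) - φ (u i)) * X ^ (i : ℕ) := by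
      rw [hsplit]
      conv_lhs => rw [hmain n]
      ring
    rw [h1]
    refine dvd_add ⟨rem n, rfl⟩ (Finset.dvd_sum fun i _ => ?_)
    refine Dvd.dvd.mul_right ?_ _
    obtain ⟨w, hw⟩ := hdiff n i
    refine ⟨-φ w, ?_⟩
    have hφw := congrArg φ hw
    rw [map_sub, map_mul, map_pow, map_natCast] at hφw
    linear_combination -hφw
  exact ⟨u, sub_eq_zero.mp (eq_zero_of_forall_p_pow_dvd _ hdvd)⟩

theorem decomp_unique {φ : PowerSeries ℤ_[p] →+* PowerSeries ℤ_[p]} (hφ : IsFrobenius p φ)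
    {u : Fin p → Rp} (h : ∑ i : Fin p, φ (u i) * X ^ (i : ℕ) = 0) : ∀ i, u i = 0 := by
  have hpne : (p : Rp) ≠ 0 := by
    intro h0
    have h1 := congrArg (PowerSeries.constantCoeff (R := ℤ_[p])) h0
    rw [map_natCast, map_zero] at h1
    have h2 : ‖((p : ℕ) : ℤ_[p])‖ = 0 := by rw [h1, norm_zero]
    rw [PadicInt.norm_p] at h2
    have hp : p.Prime := Fact.out
    have hlt : (0 : ℝ) < (p : ℝ)⁻¹ := by
      rw [inv_pos]
      exact_mod_cast hp.pos
    rw [h2] at hlt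
    exact lt_irrefl _ hlt
  have key : ∀ (n : ℕ) (u : Fin p → Rp),
      (∑ i : Fin p, φ (u i) * X ^ (i : ℕ) = 0) → ∀ i, (p : Rp) ^ n ∣ u i := by
    intro n
    induction n with
    | zero => intro u _ i; simpa using one_dvd _
    | succ n ih =>
        intro u h i
        have hmod : ∀ i, pr (u i) = 0 := by
          have h0 : ∑ i : Fin p, (pr (u i)) ^ p * X ^ (i : ℕ) = 0 := by
            have h1 := congrArg pr h
            rw [map_sum, map_zero] at h1
            rw [← h1]
            exact (Finset.sum_congr rfl fun j _ => by
              rw [map_mul, pr_phi hφ, pr_X_pow]).symm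
          exact fun i => split_eq_zero h0 i
        choose v hv using fun i => (pr_eq_zero_iff _).mp (hmod i)
        have hsum : (p : Rp) * (∑ i : Fin p, φ (v i) * X ^ (i : ℕ)) = 0 := by
          rw [Finset.mul_sum, ← h]
          exact Finset.sum_congr rfl fun j _ => by
            rw [hv j, map_mul, map_natCast]; ring
        have hzero : ∑ i : Fin p, φ (v i) * X ^ (i : ℕ) = 0 :=
          (mul_eq_zero.mp hsum).resolve_left hpne
        have := ih v hzero i
        rw [hv i, pow_succ']
        exact mul_dvd_mul_left _ this
  intro i
  exact eq_zero_of_forall_p_pow_dvd _ (fun n => key n u h i)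

theorem decomp_unique2 {φ : PowerSeries ℤ_[p] →+* PowerSeries ℤ_[p]}
    (hφ : IsFrobenius p φ) {u v : Fin p → Rp}
    (h : ∑ i : Fin p, φ (u i) * X ^ (i : ℕ) = ∑ i : Fin p, φ (v i) * X ^ (i : ℕ)) :
    ∀ i, u i = v i := by
  have h0 : ∑ i : Fin p, φ (u i - v i) * X ^ (i : ℕ) = 0 := by
    rw [Finset.sum_congr rfl fun i _ => by rw [map_sub, sub_mul],
      Finset.sum_sub_distrib, h, sub_self]
  intro i
  exact sub_eq_zero.mp (decomp_unique hφ h0 i)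

theorem exists_L (φ : PowerSeries ℤ_[p] →+* PowerSeries ℤ_[p]) (hφ : IsFrobenius p φ) :
    ∃ L : Rp → Matrix (Fin p) (Fin p) Rp,
      (∀ f (j : Fin p), f * X ^ (j : ℕ) = ∑ i : Fin p, φ (L f i j) * X ^ (i : ℕ)) ∧
      (∀ f, @Algebra.norm (PowerSeries ℤ_[p]) (PowerSeries ℤ_[p]) _ _ φ.toAlgebra f
        = (L f).det) ∧
      (∀ f g, L (f + g) = L f + L g) ∧
      (∀ a f i j, L (φ a * f) i j = a * L f i j) ∧
      (L 1 = 1) := by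
  classical
  letI : Algebra (PowerSeries ℤ_[p]) (PowerSeries ℤ_[p]) := φ.toAlgebra
  letI : SMul (PowerSeries ℤ_[p]) (PowerSeries ℤ_[p]) := Algebra.toSMul
  letI : Module (PowerSeries ℤ_[p]) (PowerSeries ℤ_[p]) := Algebra.toModule
  have hsmul : ∀ (a x : Rp), a • x = φ a * x := fun a x => by
    exact Algebra.smul_def a x
  have hli : LinearIndependent Rp (fun i : Fin p => (X : Rp) ^ (i : ℕ)) := by
    rw [Fintype.linearIndependent_iff]
    intro g hg i
    have hg' : ∑ i : Fin p, φ (g i) * X ^ (i : ℕ) = 0 := by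
      rw [← hg]
      exact Finset.sum_congr rfl fun j _ => (hsmul (g j) _).symm
    exact decomp_unique hφ hg' i
  have hspan : ⊤ ≤ Submodule.span Rp (Set.range fun i : Fin p => (X : Rp) ^ (i : ℕ)) := by
    intro f _
    obtain ⟨u, hu⟩ := exists_decomp hφ f
    rw [hu]
    refine Submodule.sum_mem _ fun i _ => ?_
    rw [← hsmul]
    exact Submodule.smul_mem _ _ (Submodule.subset_span ⟨i, rfl⟩)
  set b : Module.Basis (Fin p) Rp Rp := Module.Basis.mk hli hspan with hb
  set Lf : Rp → Matrix (Fin p) (Fin p) Rp := fun f => Algebra.leftMulMatrix b f with hLf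
  have hstar : ∀ f (j : Fin p), f * X ^ (j : ℕ) = ∑ i : Fin p, φ (Lf f i j) * X ^ (i : ℕ) := by
    intro f j
    calc f * X ^ (j : ℕ) = f * b j := by rw [hb, Module.Basis.mk_apply]
      _ = ∑ i : Fin p, b.repr (f * b j) i • b i := (Module.Basis.sum_repr b _).symm
      _ = ∑ i : Fin p, φ (Lf f i j) * X ^ (i : ℕ) := by
          refine Finset.sum_congr rfl fun i _ => ?_
          simp only [hLf]
          rw [Algebra.leftMulMatrix_eq_repr_mul, hsmul, hb, Module.Basis.mk_apply, Module.Basis.mk_apply]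
  refine ⟨Lf, hstar, ?_, ?_, ?_, ?_⟩
  · intro f
    exact Algebra.norm_eq_matrix_det b f
  · intro f g
    exact map_add _ f g
  · intro a f i j
    have h2 : ∑ ii : Fin p, φ (a * Lf f ii j) * X ^ (ii : ℕ) = (φ a * f) * X ^ (j : ℕ) := by
      rw [Finset.sum_congr rfl fun ii _ => by rw [map_mul, mul_assoc]]
      rw [← Finset.mul_sum, ← hstar f j]
      ring
    exact decomp_unique2 (u := fun ii => Lf (φ a * f) ii j)
      (v := fun ii => a * Lf f ii j) hφ
      (by rw [← hstar (φ a * f) j]; exact h2.symm) i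
  · exact map_one _

theorem isStar_pr {φ : PowerSeries ℤ_[p] →+* PowerSeries ℤ_[p]} (hφ : IsFrobenius p φ)
    {f : Rp} {M : Matrix (Fin p) (Fin p) Rp}
    (h : ∀ j : Fin p, f * X ^ (j : ℕ) = ∑ i : Fin p, φ (M i j) * X ^ (i : ℕ)) :
    IsStar (pr f) (M.map fun x => pr x) := by
  intro j
  have h1 := congrArg pr (h j)
  rw [map_mul, pr_X_pow, map_sum] at h1
  rw [h1]
  refine Finset.sum_congr rfl fun i _ => ?_
  rw [map_mul, pr_phi hφ, pr_X_pow, Matrix.map_apply]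

theorem pr_trace (M : Matrix (Fin p) (Fin p) Rp) :
    pr M.trace = (M.map fun x => pr x).trace := by
  rw [Matrix.trace, Matrix.trace, map_sum]
  exact Finset.sum_congr rfl fun i _ => rfl

theorem pr_det (M : Matrix (Fin p) (Fin p) Rp) :
    pr M.det = (M.map fun x => pr x).det := by
  exact RingHom.map_det pr M

/-- `ℤ_p`-side unit lemma: a unit plus `p` times anything is a unit. -/
theorem isUnit_add_p_mul (x y : ℤ_[p]) (hx : IsUnit x) : IsUnit (x + (p : ℤ_[p]) * y) := by
  have hp : p.Prime := Fact.out
  rw [PadicInt.isUnit_iff] at hx ⊢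
  have hple : ‖(p : ℤ_[p]) * y‖ < 1 := by
    calc ‖(p : ℤ_[p]) * y‖ = ‖(p : ℤ_[p])‖ * ‖y‖ := norm_mul _ _
      _ ≤ ‖(p : ℤ_[p])‖ * 1 :=
          mul_le_mul_of_nonneg_left (PadicInt.norm_le_one _) (norm_nonneg _)
      _ = (p : ℝ)⁻¹ := by rw [mul_one, PadicInt.norm_p]
      _ < 1 := by
          rw [inv_lt_one_iff₀]
          right
          exact_mod_cast hp.one_lt
  by_contra hne
  have hlt : ‖x + (p : ℤ_[p]) * y‖ < 1 :=
    lt_of_le_of_ne (PadicInt.norm_le_one _) hne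
  have hxe : x = (x + (p : ℤ_[p]) * y) + (-((p : ℤ_[p]) * y)) := by ring
  have : ‖x‖ < 1 := by
    rw [hxe]
    refine lt_of_le_of_lt (PadicInt.nonarchimedean _ _) ?_
    rw [norm_neg]
    exact max_lt hlt hple
  rw [hx] at this
  exact lt_irrefl _ this

end Zp

end ColemanAux

/-- **Coleman's norm operator and its congruence properties.**
Let `φ` be the operator `f(T) ↦ f((1+T)^p - 1)`, so that `ℤ_p[[T]]` is a degree-`p`
extension of `φ(ℤ_p[[T]])`, and let `N = φ⁻¹ ∘ Norm` for this extension (this is the unique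
multiplicative operator satisfying `φ(N f)(T) = ∏_{ξ ∈ μ_p} f(ξ(1+T) - 1)`).  Then `N` is
multiplicative, it is uniquely determined by its defining property, and:
(i) `N(f) ≡ f (mod p)` for every unit `f`;
(ii) if `f` is a unit and `f ≡ 1 (mod p^k)` with `k ≥ 1`, then `N(f) ≡ 1 (mod p^{k+1})`;
(iii) for a unit `f` and `k₂ ≥ k₁ ≥ 0`, `N^{k₂}(f) ≡ N^{k₁}(f) (mod p^{k₁+1})`. -/
theorem coleman_norm_operator
    (φ : PowerSeries ℤ_[p] →+* PowerSeries ℤ_[p]) (hφ : IsFrobenius p φ)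
    (Nop : PowerSeries ℤ_[p] → PowerSeries ℤ_[p])
    (hN : ∀ f, Nop f =
      @Algebra.norm (PowerSeries ℤ_[p]) (PowerSeries ℤ_[p]) _ _ φ.toAlgebra f) :
    (∀ f g, Nop (f * g) = Nop f * Nop g) ∧
    (∀ Nop' : PowerSeries ℤ_[p] → PowerSeries ℤ_[p],
      (∀ f, φ (Nop' f) = φ (Nop f)) → Nop' = Nop) ∧
    (∀ f : PowerSeries ℤ_[p], IsUnit f → (p : PowerSeries ℤ_[p]) ∣ (Nop f - f)) ∧
    (∀ (f : PowerSeries ℤ_[p]) (k : ℕ), IsUnit f → 1 ≤ k →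
      (p : PowerSeries ℤ_[p]) ^ k ∣ (f - 1) →
      (p : PowerSeries ℤ_[p]) ^ (k + 1) ∣ (Nop f - 1)) ∧
    (∀ (f : PowerSeries ℤ_[p]) (k₁ k₂ : ℕ), IsUnit f → k₁ ≤ k₂ →
      (p : PowerSeries ℤ_[p]) ^ (k₁ + 1) ∣ (Nop^[k₂] f - Nop^[k₁] f)) := by
  classical
  have hp : p.Prime := Fact.out
  haveI : NeZero p := ⟨hp.ne_zero⟩
  obtain ⟨L, hstar, hnorm, hadd, hsmulE, hone⟩ := ColemanAux.exists_L φ hφ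
  -- multiplicativity
  have hmul : ∀ f g, Nop (f * g) = Nop f * Nop g := by
    intro f g
    rw [hN, hN, hN]
    letI : Algebra (PowerSeries ℤ_[p]) (PowerSeries ℤ_[p]) := φ.toAlgebra
    exact map_mul (Algebra.norm (PowerSeries ℤ_[p])) f g
  -- injectivity of φ
  have hker : ∀ g, φ g = 0 → g = 0 := by
    intro g hg
    have h0 : ∑ i : Fin p, φ ((fun i : Fin p => if i = 0 then g else 0) i) * X ^ (i : ℕ)
        = 0 := by
      rw [Finset.sum_eq_single (0 : Fin p)]
      · simp [hg]
      · intro b _ hb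
        simp [hb]
      · intro h
        exact absurd (Finset.mem_univ _) h
    have := ColemanAux.decomp_unique hφ h0 0
    simpa using this
  have hinj : Function.Injective φ := by
    intro a b hab
    have h1 : φ (a - b) = 0 := by rw [map_sub, hab, sub_self]
    exact sub_eq_zero.mp (hker _ h1)
  have huniq : ∀ Nop' : PowerSeries ℤ_[p] → PowerSeries ℤ_[p],
      (∀ f, φ (Nop' f) = φ (Nop f)) → Nop' = Nop := by
    intro Nop' h
    funext f
    exact hinj (h f)
  -- part (i), for all f
  have hi : ∀ f, (p : PowerSeries ℤ_[p]) ∣ (Nop f - f) := by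
    intro f
    rw [← ColemanAux.pr_eq_zero_iff, map_sub]
    have hdet := (ColemanAux.isStar_pr hφ (hstar f)).det_eq
    rw [hN f, hnorm f, ColemanAux.pr_det, hdet, sub_self]
  -- part (ii)
  have hii : ∀ (f : PowerSeries ℤ_[p]) (k : ℕ), 1 ≤ k →
      (p : PowerSeries ℤ_[p]) ^ k ∣ (f - 1) →
      (p : PowerSeries ℤ_[p]) ^ (k + 1) ∣ (Nop f - 1) := by
    intro f k hk hdvd
    obtain ⟨w, hw⟩ := hdvd
    have hf1 : f = 1 + ((p : PowerSeries ℤ_[p]) ^ k * w) := by linear_combination hw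
    have hent : L f = 1 + ((p : PowerSeries ℤ_[p]) ^ k) • L w := by
      refine Matrix.ext fun i j => ?_
      rw [hf1, hadd, Matrix.add_apply, Matrix.add_apply, hone, Matrix.smul_apply]
      congr 1
      rw [show (p : PowerSeries ℤ_[p]) ^ k * w = φ ((p : PowerSeries ℤ_[p]) ^ k) * w by
        rw [map_pow, map_natCast], hsmulE]
      rw [smul_eq_mul]
    rw [hN f, hnorm f, hent, Matrix.det_one_add_smul]
    have htr : (p : PowerSeries ℤ_[p]) ∣ (L w).trace := by
      rw [← ColemanAux.pr_eq_zero_iff, ColemanAux.pr_trace]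
      exact (ColemanAux.isStar_pr hφ (hstar w)).trace_eq_zero
    obtain ⟨t, ht⟩ := htr
    set E := (Matrix.det
      (1 + (Polynomial.X : Polynomial (PowerSeries ℤ_[p])) • (L w).map Polynomial.C)).divX.divX.eval
        ((p : PowerSeries ℤ_[p]) ^ k) with hE
    have heq : 1 + (L w).trace * (p : PowerSeries ℤ_[p]) ^ k
        + E * ((p : PowerSeries ℤ_[p]) ^ k) ^ 2 - 1
        = (L w).trace * (p : PowerSeries ℤ_[p]) ^ k + E * ((p : PowerSeries ℤ_[p]) ^ k) ^ 2 := by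
      ring
    rw [heq]
    refine dvd_add ?_ ?_
    · exact ⟨t, by rw [ht, pow_succ]; ring⟩
    · refine Dvd.dvd.mul_left ?_ E
      rw [← pow_mul]
      exact pow_dvd_pow _ (by omega)
  -- Nop preserves units
  have hunit : ∀ f, IsUnit f → IsUnit (Nop f) := by
    intro f hf
    obtain ⟨c, hc⟩ := hi f
    rw [PowerSeries.isUnit_iff_constantCoeff] at hf ⊢
    have hcc : PowerSeries.constantCoeff (R := ℤ_[p]) (Nop f)
        = PowerSeries.constantCoeff (R := ℤ_[p]) f
          + (p : ℤ_[p]) * PowerSeries.constantCoeff (R := ℤ_[p]) c := by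
      have h1 := congrArg (PowerSeries.constantCoeff (R := ℤ_[p])) hc
      rw [map_sub, map_mul, map_natCast] at h1
      linear_combination h1
    rw [hcc]
    exact ColemanAux.isUnit_add_p_mul _ _ hf
  -- consecutive congruences
  have hconsec : ∀ (f : PowerSeries ℤ_[p]), IsUnit f → ∀ j : ℕ,
      IsUnit (Nop^[j] f) ∧
      (p : PowerSeries ℤ_[p]) ^ (j + 1) ∣ (Nop^[j + 1] f - Nop^[j] f) := by
    intro f hf j
    induction j with
    | zero =>
        refine ⟨hf, ?_⟩
        simpa [pow_one] using hi f
    | succ j ih =>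
        obtain ⟨hu, hdvd⟩ := ih
        have hu' : IsUnit (Nop^[j + 1] f) := by
          rw [Function.iterate_succ_apply']
          exact hunit _ hu
        refine ⟨hu', ?_⟩
        obtain ⟨vg, hvg⟩ := hu
        set u : PowerSeries ℤ_[p] := ↑vg⁻¹ * Nop^[j + 1] f with hudef
        have hgu : Nop^[j + 1] f = Nop^[j] f * u := by
          rw [hudef, ← mul_assoc, ← hvg, Units.mul_inv, one_mul]
        have huu : IsUnit u := (Units.isUnit vg⁻¹).mul hu'
        have hu1 : (p : PowerSeries ℤ_[p]) ^ (j + 1) ∣ (u - 1) := by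
          have hrw : u - 1 = ↑vg⁻¹ * (Nop^[j + 1] f - Nop^[j] f) := by
            rw [hudef, mul_sub, ← hvg, Units.inv_mul]
          rw [hrw]
          exact Dvd.dvd.mul_left hdvd _
        have h2 := hii u (j + 1) (Nat.succ_le_succ (Nat.zero_le j)) hu1
        have hg'' : Nop^[j + 2] f - Nop^[j + 1] f = Nop (Nop^[j] f) * (Nop u - 1) := by
          have e1 : Nop^[j + 2] f = Nop (Nop^[j + 1] f) := Function.iterate_succ_apply' _ _ _
          have e2 : Nop^[j + 1] f = Nop (Nop^[j] f) := Function.iterate_succ_apply' _ _ _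
          rw [e1, hgu, hmul, mul_sub, mul_one, ← hgu, ← e2]
        rw [show j + 1 + 1 = j + 2 from rfl, hg'']
        exact Dvd.dvd.mul_left h2 _
  have hiii : ∀ (f : PowerSeries ℤ_[p]) (k₁ k₂ : ℕ), IsUnit f → k₁ ≤ k₂ →
      (p : PowerSeries ℤ_[p]) ^ (k₁ + 1) ∣ (Nop^[k₂] f - Nop^[k₁] f) := by
    intro f k₁ k₂ hf hle
    induction k₂, hle using Nat.le_induction with
    | base => simp
    | succ m hm ih =>
        have h1 : (p : PowerSeries ℤ_[p]) ^ (k₁ + 1) ∣ (Nop^[m + 1] f - Nop^[m] f) :=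
          dvd_trans (pow_dvd_pow _ (by omega)) (hconsec f hf m).2
        have hsplit : Nop^[m + 1] f - Nop^[k₁] f
            = (Nop^[m + 1] f - Nop^[m] f) + (Nop^[m] f - Nop^[k₁] f) := by ring
        rw [hsplit]
        exact dvd_add h1 ih
  exact ⟨hmul, huniq, fun f _ => hi f, fun f k _ hk hd => hii f k hk hd, hiii⟩
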